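/- Let C ⊆ F^n be a perfect binary code containing the all-zero vector, let λ : C → ZMod 2 be any map, and let C' = {(x + y, |x| + λ(y), x) : x ∈ F^n, y ∈ C} ⊆ F^{2n+1} be the corresponding Vasil'ev code. Then rank(C) + n ≤ rank(C') ≤ rank(C) + n + 1. -/

import Mathlib

open Finset

/-- The binary vector space `F^n`. -/
abbrev F (n : ℕ) : Type := Fin n → ZMod 2

/-- Action of a coordinate permutation: `(π x) i = x (π⁻¹ i)`. -/
def permAct {n : ℕ} (π : Equiv.Perm (Fin n)) (x : F n) : F n := fun i => x (π⁻¹ i)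

/-- `(v, π)` is an isometry fixing the code `C` set-wise. -/
def IsIsoPair {n : ℕ} (C : Set (F n)) (v : F n) (π : Equiv.Perm (Fin n)) : Prop :=
  (fun x => v + permAct π x) '' C = C

/-- `C` is a single-error-correcting perfect binary code. -/
def IsPerfectCode {n : ℕ} (C : Set (F n)) : Prop :=
  ∀ x : F n, ∃! y : F n, y ∈ C ∧ hammingDist x y ≤ 1

/-- `P` is a propelinear structure on the code `C`. -/
def IsPropStructure {n : ℕ} (C : Set (F n)) (P : F n → Equiv.Perm (Fin n)) : Prop :=
  (∀ x ∈ C, IsIsoPair C x (P x)) ∧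
  (∀ x ∈ C, ∀ y ∈ C, P (x + permAct (P x) y) = P x * P y)

/-- `C` admits a propelinear structure. -/
def IsPropelinear {n : ℕ} (C : Set (F n)) : Prop :=
  ∃ P : F n → Equiv.Perm (Fin n), IsPropStructure C P

/-- The rank of a code: dimension of its linear span over GF(2). -/
noncomputable def codeRank {n : ℕ} (C : Set (F n)) : ℕ :=
  Module.finrank (ZMod 2) (Submodule.span (ZMod 2) C)

/-- The kernel of a code `C`: codewords whose translate fixes `C`. -/
def codeKernel {n : ℕ} (C : Set (F n)) : Set (F n) :=
  {x ∈ C | (fun c => x + c) '' C = C}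

/-- A propelinear structure is normalized if codewords in the same coset
of the kernel get the same permutation. -/
def IsNormalized {n : ℕ} (C : Set (F n)) (P : F n → Equiv.Perm (Fin n)) : Prop :=
  ∀ x ∈ C, ∀ y ∈ C, x + y ∈ codeKernel C → P x = P y

/-- A code is transitive if its automorphism group acts transitively on it. -/
def IsTransitive {n : ℕ} (C : Set (F n)) : Prop :=
  ∀ x ∈ C, ∀ y ∈ C, ∃ v π, IsIsoPair C v π ∧ v + permAct π x = y

/-- The (ZMod 2) weight parity `|x| = Σ_i x_i`. -/
def wt {n : ℕ} (x : F n) : ZMod 2 := ∑ i, x i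

/-- Assemble a vector of `F^(2n+1)` from a first block of `n` coordinates,
a middle coordinate and a last block of `n` coordinates. -/
def vasVec {n : ℕ} (a : F n) (b : ZMod 2) (c : F n) : F (2 * n + 1) :=
  fun i =>
    if h : (i : ℕ) < n then a ⟨i, h⟩
    else if h' : (i : ℕ) = n then b
    else c ⟨(i : ℕ) - (n + 1), by have := i.isLt; omega⟩

/-- The Vasil'ev code of `C` with function `lam`. -/
def vasCode {n : ℕ} (C : Set (F n)) (lam : F n → ZMod 2) : Set (F (2 * n + 1)) :=
  {w | ∃ x : F n, ∃ y ∈ C, w = vasVec (x + y) (wt x + lam y) x}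

/-- Assemble a vector of `F^(tm+t+m)` from blocks of `tm`, `t` and `m` coordinates. -/
def mollVec {t m : ℕ} (x : F (t * m)) (b : F t) (c : F m) : F (t * m + t + m) :=
  fun i =>
    if h : (i : ℕ) < t * m then x ⟨i, h⟩
    else if h' : (i : ℕ) < t * m + t then b ⟨(i : ℕ) - t * m, by omega⟩
    else c ⟨(i : ℕ) - (t * m + t), by have := i.isLt; omega⟩

/-- First generalized parity-check function: `p1(x)_i = Σ_j x_{ij}`. -/
def p1 {t m : ℕ} (x : F (t * m)) : F t := fun i => ∑ j : Fin m, x (finProdFinEquiv (i, j))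

/-- Second generalized parity-check function: `p2(x)_j = Σ_i x_{ij}`. -/
def p2 {t m : ℕ} (x : F (t * m)) : F m := fun j => ∑ i : Fin t, x (finProdFinEquiv (i, j))

/-- The Mollard code of `Ct` and `Cm` with function `f`. -/
def mollCode {t m : ℕ} (Ct : Set (F t)) (Cm : Set (F m)) (f : F t → F m) :
    Set (F (t * m + t + m)) :=
  {w | ∃ x : F (t * m), ∃ y ∈ Ct, ∃ z ∈ Cm, w = mollVec x (y + p1 x) (z + p2 x + f y)}

section Aux

variable {n : ℕ}

lemma vasVec_add (a a' c c' : F n) (b b' : ZMod 2) :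
    vasVec (a + a') (b + b') (c + c') = vasVec a b c + vasVec a' b' c' := by
  funext i
  simp only [vasVec, Pi.add_apply]
  split_ifs <;> simp

lemma vasVec_smul (r : ZMod 2) (a c : F n) (b : ZMod 2) :
    r • vasVec a b c = vasVec (r • a) (r * b) (r • c) := by
  funext i
  simp only [vasVec, Pi.smul_apply, smul_eq_mul]
  split_ifs <;> simp

lemma wt_add (x y : F n) : wt (x + y) = wt x + wt y := by
  simp [wt, Finset.sum_add_distrib]

lemma wt_smul (r : ZMod 2) (x : F n) : wt (r • x) = r * wt x := by
  simp [wt, Finset.mul_sum]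

/-- First-block projection. -/
def projA (n : ℕ) : F (2 * n + 1) →ₗ[ZMod 2] F n where
  toFun w := fun i => w ⟨i, by omega⟩
  map_add' _ _ := rfl
  map_smul' _ _ := rfl

/-- Last-block projection. -/
def projC (n : ℕ) : F (2 * n + 1) →ₗ[ZMod 2] F n where
  toFun w := fun j => w ⟨n + 1 + j, by omega⟩
  map_add' _ _ := rfl
  map_smul' _ _ := rfl

lemma projA_vasVec (a c : F n) (b : ZMod 2) : projA n (vasVec a b c) = a := by
  funext i
  simp [projA, vasVec, i.isLt]

lemma projC_vasVec (a c : F n) (b : ZMod 2) : projC n (vasVec a b c) = c := by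
  funext j
  have h1 : ¬ (n + 1 + (j : ℕ) < n) := by omega
  have h2 : ¬ (n + 1 + (j : ℕ) = n) := by omega
  simp only [projC, LinearMap.coe_mk, AddHom.coe_mk, vasVec, h1, h2, dif_neg, dite_false]
  have hval : n + 1 + (j : ℕ) - (n + 1) = (j : ℕ) := by omega
  exact congrArg c (Fin.ext hval)

/-- `x ↦ vasVec x (wt x) x` as a linear map. -/
def Lmap (n : ℕ) : F n →ₗ[ZMod 2] F (2 * n + 1) where
  toFun x := vasVec x (wt x) x
  map_add' x y := by
    show vasVec (x + y) (wt (x + y)) (x + y) = vasVec x (wt x) x + vasVec y (wt y) y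
    rw [wt_add, vasVec_add]
  map_smul' r x := by
    show vasVec (r • x) (wt (r • x)) (r • x) = r • vasVec x (wt x) x
    rw [wt_smul, vasVec_smul]

/-- `y ↦ vasVec y 0 0` as a linear map. -/
def Jmap (n : ℕ) : F n →ₗ[ZMod 2] F (2 * n + 1) where
  toFun y := vasVec y 0 0
  map_add' x y := by
    show vasVec (x + y) 0 0 = vasVec x 0 0 + vasVec y 0 0
    rw [← vasVec_add, add_zero, add_zero]
  map_smul' r x := by
    show vasVec (r • x) 0 0 = r • vasVec x 0 0
    rw [vasVec_smul, mul_zero, smul_zero]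

/-- finrank of a product submodule. -/
lemma finrank_prod_submodule {K M N : Type*} [Field K] [AddCommGroup M] [AddCommGroup N]
    [Module K M] [Module K N] [FiniteDimensional K M] [FiniteDimensional K N]
    (p : Submodule K M) (q : Submodule K N) :
    Module.finrank K (p.prod q) = Module.finrank K p + Module.finrank K q := by
  have e : ↥(p.prod q) ≃ₗ[K] ↥p × ↥q :=
    { toFun := fun r => (⟨r.1.1, r.2.1⟩, ⟨r.1.2, r.2.2⟩)
      invFun := fun r => ⟨(r.1.1, r.2.1), ⟨r.1.2, r.2.2⟩⟩
      left_inv := fun r => rfl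
      right_inv := fun r => rfl
      map_add' := fun _ _ => rfl
      map_smul' := fun _ _ => rfl }
  rw [e.finrank_eq, Module.finrank_prod]

end Aux


lemma addAddCancel {n : ℕ} (u v : F n) : u + v + u = v := by
  funext i
  simp only [Pi.add_apply]
  rw [add_comm (u i) (v i), add_assoc, CharTwo.add_self_eq_zero, add_zero]

/-- Bounds on the rank of a Vasil'ev code:
`rank(C) + n ≤ rank(C') ≤ rank(C) + n + 1`. -/
theorem vasilev_rank_bounds {n : ℕ} (C : Set (F n))
    (hC : IsPerfectCode C) (h0 : (0 : F n) ∈ C) (lam : F n → ZMod 2) :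
    codeRank C + n ≤ codeRank (vasCode C lam) ∧
      codeRank (vasCode C lam) ≤ codeRank C + n + 1 := by
  classical
  have hTw : ∀ (x y : F n) (b : ZMod 2),
      ((projA n + projC n).prod (projC n)) (vasVec (x + y) b x) = (y, x) := by
    intro x y b
    simp only [LinearMap.prod_apply, Function.prod, LinearMap.add_apply,
      projA_vasVec, projC_vasVec]
    rw [addAddCancel]
  set T : F (2 * n + 1) →ₗ[ZMod 2] (F n × F n) := (projA n + projC n).prod (projC n) with hT
  set C' := vasCode C lam with hC'def
  constructor
  · -- lower bound
    have key1 : (Submodule.span (ZMod 2) C).prod (⊤ : Submodule (ZMod 2) (F n)) ≤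
        Submodule.map T (Submodule.span (ZMod 2) C') := by
      rintro ⟨p, q⟩ ⟨hp, -⟩
      have h1 : ((p, 0) : F n × F n) ∈ Submodule.map T (Submodule.span (ZMod 2) C') := by
        refine Submodule.span_induction (p := fun p _ =>
          ((p, 0) : F n × F n) ∈ Submodule.map T (Submodule.span (ZMod 2) C'))
          ?_ ?_ ?_ ?_ hp
        · intro y hy
          refine ⟨vasVec (0 + y) (wt 0 + lam y) 0, Submodule.subset_span ⟨0, y, hy, rfl⟩, ?_⟩
          exact hTw 0 y _
        · exact Submodule.zero_mem _
        · intro a b _ _ ha hb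
          have := Submodule.add_mem _ ha hb
          simpa using this
        · intro r a _ ha
          have := Submodule.smul_mem _ r ha
          simpa using this
      have h2 : ((0, q) : F n × F n) ∈ Submodule.map T (Submodule.span (ZMod 2) C') := by
        refine ⟨vasVec (q + 0) (wt q + lam 0) q, Submodule.subset_span ⟨q, 0, h0, rfl⟩, ?_⟩
        exact hTw q 0 _
      have : ((p, q) : F n × F n) = (p, 0) + (0, q) := by simp
      rw [this]
      exact Submodule.add_mem _ h1 h2
    have e1 : codeRank C + n =
        Module.finrank (ZMod 2)
          ((Submodule.span (ZMod 2) C).prod (⊤ : Submodule (ZMod 2) (F n))) := by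
      rw [finrank_prod_submodule, finrank_top, Module.finrank_fin_fun]
      rfl
    rw [e1]
    calc Module.finrank (ZMod 2)
          ((Submodule.span (ZMod 2) C).prod (⊤ : Submodule (ZMod 2) (F n)))
        ≤ Module.finrank (ZMod 2) (Submodule.map T (Submodule.span (ZMod 2) C')) :=
          Submodule.finrank_mono key1
      _ ≤ codeRank C' := Submodule.finrank_map_le _ _
  · -- upper bound
    set e : F (2 * n + 1) := vasVec (0 : F n) 1 0 with he
    set M : Submodule (ZMod 2) (F (2 * n + 1)) :=
      LinearMap.range (Lmap n) ⊔ Submodule.map (Jmap n) (Submodule.span (ZMod 2) C) ⊔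
        Submodule.span (ZMod 2) {e} with hM
    have hsub : C' ⊆ (M : Set (F (2 * n + 1))) := by
      rintro w ⟨x, y, hy, rfl⟩
      have h1 : lam y • e = vasVec (0 : F n) (lam y) 0 := by
        rw [he, vasVec_smul]
        simp
      have hw : vasVec (x + y) (wt x + lam y) x = Lmap n x + (Jmap n y + lam y • e) := by
        rw [h1]
        show _ = vasVec x (wt x) x + (vasVec y 0 0 + vasVec 0 (lam y) 0)
        rw [← vasVec_add, ← vasVec_add]
        norm_num
      rw [hw]
      refine Submodule.add_mem _ (Submodule.mem_sup_left (Submodule.mem_sup_left ⟨x, rfl⟩))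
        (Submodule.add_mem _
          (Submodule.mem_sup_left (Submodule.mem_sup_right
            ⟨y, Submodule.subset_span hy, rfl⟩))
          (Submodule.mem_sup_right
            (Submodule.smul_mem _ _ (Submodule.subset_span (Set.mem_singleton _)))))
    have hspan : Submodule.span (ZMod 2) C' ≤ M := Submodule.span_le.mpr hsub
    have hrange : Module.finrank (ZMod 2) (LinearMap.range (Lmap n)) ≤ n := by
      have := LinearMap.finrank_range_le (Lmap n)
      rwa [Module.finrank_fin_fun] at this
    have hmapJ : Module.finrank (ZMod 2)
        (Submodule.map (Jmap n) (Submodule.span (ZMod 2) C)) ≤ codeRank C :=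
      Submodule.finrank_map_le _ _
    have hsing : Module.finrank (ZMod 2) (Submodule.span (ZMod 2) ({e} : Set _)) ≤ 1 := by
      have := finrank_span_le_card (R := ZMod 2) ({e} : Set (F (2 * n + 1)))
      simpa using this
    calc codeRank C' ≤ Module.finrank (ZMod 2) M := Submodule.finrank_mono hspan
      _ ≤ Module.finrank (ZMod 2)
            ↥(LinearMap.range (Lmap n) ⊔ Submodule.map (Jmap n) (Submodule.span (ZMod 2) C)) +
          Module.finrank (ZMod 2) (Submodule.span (ZMod 2) ({e} : Set _)) :=
            Submodule.finrank_add_le_finrank_add_finrank _ _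
      _ ≤ (Module.finrank (ZMod 2) (LinearMap.range (Lmap n)) +
          Module.finrank (ZMod 2)
            (Submodule.map (Jmap n) (Submodule.span (ZMod 2) C))) +
          Module.finrank (ZMod 2) (Submodule.span (ZMod 2) ({e} : Set _)) := by
            exact Nat.add_le_add_right (Submodule.finrank_add_le_finrank_add_finrank _ _) _
      _ ≤ (n + codeRank C) + 1 := by
            exact add_le_add (add_le_add hrange hmapJ) hsing
      _ = codeRank C + n + 1 := by omega
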